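/- In the setting of the cone invariance lemma: for 0 < σ < 1 there exist C, ε₀ > 0 such that for 0 < ε < ε₀, Dε ≤ δ ≤ ε₀, and any finite sequence L₁,…,L_j of perturbed maps [[A+α_i, β_i],[γ_i, B+δ_i]] with all perturbation blocks of norm ≤ ε, every unit vector v making angle at least δ with {0} × ℝ^{d-k} satisfies ‖Π(L_j ⋯ L₁ v)‖ ≥ C (μ − ε^{1−σ})^j δ, where Π is the orthogonal projection onto ℝ^k × {0}. -/

import Mathlib

set_option maxHeartbeats 1000000


/-- expansion transverse to the vertical. With `L = A ⊕ B` on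
`ℝ^k ⊕ ℝ^m` (`‖A⁻¹‖ ≤ μ⁻¹`, `‖B‖ ≤ λ < μ`) and `0 < σ < 1`, there are constants
`D, C, ε₀ > 0` such that for `0 < ε < ε₀`, `Dε ≤ δ ≤ ε₀`, and any finite sequence of
perturbed maps `L_i = [[A+α_i, β_i],[γ_i, B+δ_i]]` with all perturbation blocks of
norm `≤ ε`, every unit vector making angle at least `δ` with `{0} × ℝ^m` satisfies
`‖Π(L_j ⋯ L₁ v)‖ ≥ C (μ − ε^{1−σ})^j δ`, where `Π` is the orthogonal projection onto
`ℝ^k × {0}` (here `(u_i, v_i)` is the orbit of the initial vector `(u₀, v₀)`). -/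
theorem cone_expansion_estimate (k m : ℕ) (μ lam sigma : ℝ) (hμ : 0 < μ)
    (hlam : lam < μ) (hσ₀ : 0 < sigma) (hσ₁ : sigma < 1)
    (A : EuclideanSpace ℝ (Fin k) ≃L[ℝ] EuclideanSpace ℝ (Fin k))
    (B : EuclideanSpace ℝ (Fin m) →L[ℝ] EuclideanSpace ℝ (Fin m))
    (hA : ‖(A.symm : EuclideanSpace ℝ (Fin k) →L[ℝ] EuclideanSpace ℝ (Fin k))‖ ≤ μ⁻¹)
    (hB : ‖B‖ ≤ lam) :
    ∃ D > 0, ∃ C > 0, ∃ ε₀ > 0, ∀ ε : ℝ, 0 < ε → ε < ε₀ →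
      ∀ δ : ℝ, D * ε ≤ δ → δ ≤ ε₀ →
      ∀ (j : ℕ)
        (α : ℕ → (EuclideanSpace ℝ (Fin k) →L[ℝ] EuclideanSpace ℝ (Fin k)))
        (β : ℕ → (EuclideanSpace ℝ (Fin m) →L[ℝ] EuclideanSpace ℝ (Fin k)))
        (γ : ℕ → (EuclideanSpace ℝ (Fin k) →L[ℝ] EuclideanSpace ℝ (Fin m)))
        (δ' : ℕ → (EuclideanSpace ℝ (Fin m) →L[ℝ] EuclideanSpace ℝ (Fin m))),
        (∀ i < j, ‖α i‖ ≤ ε ∧ ‖β i‖ ≤ ε ∧ ‖γ i‖ ≤ ε ∧ ‖δ' i‖ ≤ ε) →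
      ∀ (u : ℕ → EuclideanSpace ℝ (Fin k)) (v : ℕ → EuclideanSpace ℝ (Fin m)),
        (∀ i < j, u (i + 1) =
            (A : EuclideanSpace ℝ (Fin k) →L[ℝ] EuclideanSpace ℝ (Fin k)) (u i)
              + α i (u i) + β i (v i)) →
        (∀ i < j, v (i + 1) = γ i (u i) + B (v i) + δ' i (v i)) →
        ‖u 0‖ ^ 2 + ‖v 0‖ ^ 2 = 1 →
        Real.sin δ ≤ ‖u 0‖ →
        C * (μ - ε ^ (1 - sigma)) ^ j * δ ≤ ‖u j‖ := by
  have hlam0 : 0 ≤ lam := le_trans (norm_nonneg B) hB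
  have hμlam : 0 < μ - lam := by linarith
  set K : ℝ := 2 / (μ - lam) with hKdef
  have hK : 0 < K := by positivity
  have hK2 : K * (μ - lam) = 2 := div_mul_cancel₀ _ (ne_of_gt hμlam)
  refine ⟨4 * K, by positivity, 1/4, by norm_num,
    min (min 1 (((μ - lam)/4) ^ (1 - sigma)⁻¹)) (min ((μ - lam)/4) ((1 + K)⁻¹ ^ sigma⁻¹)),
    ?_, ?_⟩
  · have : (0:ℝ) < (1 + K)⁻¹ := by positivity
    have h1σ : (0:ℝ) < μ - lam := hμlam
    refine lt_min (lt_min one_pos (by positivity)) (lt_min (by positivity) (by positivity))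
  intro ε hε hεε₀ δ hδD hδε₀ j α β γ δ' hpert u v hu hv hnorm hsin
  have hε1 : ε < 1 := lt_of_lt_of_le hεε₀ (le_trans (min_le_left _ _) (min_le_left _ _))
  have hε2 : ε ≤ ((μ - lam)/4) ^ (1 - sigma)⁻¹ :=
    le_of_lt (lt_of_lt_of_le hεε₀ (le_trans (min_le_left _ _) (min_le_right _ _)))
  have hε3 : ε ≤ (μ - lam)/4 :=
    le_of_lt (lt_of_lt_of_le hεε₀ (le_trans (min_le_right _ _) (min_le_left _ _)))
  have hε4 : ε ≤ (1 + K)⁻¹ ^ sigma⁻¹ :=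
    le_of_lt (lt_of_lt_of_le hεε₀ (le_trans (min_le_right _ _) (min_le_right _ _)))
  have hδ1 : δ ≤ 1 := le_trans hδε₀ (le_trans (min_le_left _ _) (min_le_left _ _))
  have hδ0 : 0 < δ := lt_of_lt_of_le (by positivity) hδD
  -- key rpow estimates
  have h2 : ε ^ (1 - sigma) ≤ (μ - lam)/4 := by
    calc ε ^ (1 - sigma) ≤ (((μ - lam)/4) ^ (1 - sigma)⁻¹) ^ (1 - sigma) :=
          Real.rpow_le_rpow hε.le hε2 (by linarith)
      _ = (μ - lam)/4 := Real.rpow_inv_rpow (by positivity) (by linarith)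
  have hεσ : ε ^ sigma ≤ (1 + K)⁻¹ := by
    calc ε ^ sigma ≤ ((1 + K)⁻¹ ^ sigma⁻¹) ^ sigma :=
          Real.rpow_le_rpow hε.le hε4 hσ₀.le
      _ = (1 + K)⁻¹ := Real.rpow_inv_rpow (by positivity) (ne_of_gt hσ₀)
  have h1 : ε * (1 + K * ε) ≤ ε ^ (1 - sigma) := by
    have hsplit : ε ^ sigma * ε ^ (1 - sigma) = ε := by
      rw [← Real.rpow_add hε, show sigma + (1 - sigma) = 1 by ring, Real.rpow_one]
    have hKe : 1 + K * ε ≤ 1 + K := by nlinarith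
    have hpos : 0 < ε ^ (1 - sigma) := Real.rpow_pos_of_pos hε _
    have hinv : (1 + K)⁻¹ * (1 + K) = 1 := inv_mul_cancel₀ (by positivity)
    have hx1 : ε ^ sigma * (1 + K * ε) ≤ 1 := by
      have := mul_le_mul hεσ hKe (by positivity) (by positivity)
      linarith
    have hmul := mul_le_mul_of_nonneg_right hx1 hpos.le
    have heq : ε ^ sigma * (1 + K * ε) * ε ^ (1 - sigma) = ε * (1 + K * ε) := by
      rw [mul_right_comm, hsplit]
    linarith
  set g : ℝ := μ - ε ^ (1 - sigma) with hgdef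
  have hg0 : 0 ≤ g := by
    have : ε ^ (1 - sigma) ≤ (μ - lam)/4 := h2
    simp only [hgdef]; linarith
  have hcoef : 1 + K * (lam + ε) ≤ K * g := by
    have : K * (ε + ε ^ (1 - sigma)) ≤ K * ((μ - lam)/4 + (μ - lam)/4) := by
      have := Real.rpow_pos_of_pos hε (1 - sigma)
      nlinarith
    simp only [hgdef]; nlinarith
  -- one-step estimate
  have step : ∀ i < j, g * (‖u i‖ - K * ε * ‖v i‖) ≤ ‖u (i+1)‖ - K * ε * ‖v (i+1)‖ := by
    intro i hi
    obtain ⟨hα, hβ, hγ, hδ'⟩ := hpert i hi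
    have hAu : μ * ‖u i‖ ≤ ‖(A : EuclideanSpace ℝ (Fin k) →L[ℝ] EuclideanSpace ℝ (Fin k)) (u i)‖ := by
      have h1' : ‖u i‖ ≤ ‖(A.symm : EuclideanSpace ℝ (Fin k) →L[ℝ] EuclideanSpace ℝ (Fin k))‖ *
          ‖(A : EuclideanSpace ℝ (Fin k) →L[ℝ] EuclideanSpace ℝ (Fin k)) (u i)‖ := by
        have h := (A.symm : EuclideanSpace ℝ (Fin k) →L[ℝ] EuclideanSpace ℝ (Fin k)).le_opNorm
          ((A : EuclideanSpace ℝ (Fin k) →L[ℝ] EuclideanSpace ℝ (Fin k)) (u i))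
        simp only [ContinuousLinearEquiv.coe_coe, ContinuousLinearEquiv.symm_apply_apply] at h
        exact h
      have hnn : 0 ≤ ‖(A : EuclideanSpace ℝ (Fin k) →L[ℝ] EuclideanSpace ℝ (Fin k)) (u i)‖ :=
        norm_nonneg _
      have h2' : ‖u i‖ ≤ μ⁻¹ * ‖(A : EuclideanSpace ℝ (Fin k) →L[ℝ] EuclideanSpace ℝ (Fin k)) (u i)‖ :=
        le_trans h1' (mul_le_mul_of_nonneg_right hA hnn)
      have := mul_le_mul_of_nonneg_left h2' hμ.le
      calc μ * ‖u i‖ ≤ μ * (μ⁻¹ * ‖(A : EuclideanSpace ℝ (Fin k) →L[ℝ] EuclideanSpace ℝ (Fin k)) (u i)‖) := this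
        _ = ‖(A : EuclideanSpace ℝ (Fin k) →L[ℝ] EuclideanSpace ℝ (Fin k)) (u i)‖ := by
            rw [← mul_assoc, mul_inv_cancel₀ hμ.ne', one_mul]
    have hαu : ‖α i (u i)‖ ≤ ε * ‖u i‖ :=
      le_trans ((α i).le_opNorm _) (mul_le_mul_of_nonneg_right hα (norm_nonneg _))
    have hβv : ‖β i (v i)‖ ≤ ε * ‖v i‖ :=
      le_trans ((β i).le_opNorm _) (mul_le_mul_of_nonneg_right hβ (norm_nonneg _))
    have hγu : ‖γ i (u i)‖ ≤ ε * ‖u i‖ :=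
      le_trans ((γ i).le_opNorm _) (mul_le_mul_of_nonneg_right hγ (norm_nonneg _))
    have hδv : ‖δ' i (v i)‖ ≤ ε * ‖v i‖ :=
      le_trans ((δ' i).le_opNorm _) (mul_le_mul_of_nonneg_right hδ' (norm_nonneg _))
    have hBv : ‖B (v i)‖ ≤ lam * ‖v i‖ :=
      le_trans (B.le_opNorm _) (mul_le_mul_of_nonneg_right hB (norm_nonneg _))
    have hulb : μ * ‖u i‖ - ε * ‖u i‖ - ε * ‖v i‖ ≤ ‖u (i+1)‖ := by
      rw [hu i hi]
      have t1 : ‖(A : EuclideanSpace ℝ (Fin k) →L[ℝ] EuclideanSpace ℝ (Fin k)) (u i)‖ ≤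
          ‖(A : EuclideanSpace ℝ (Fin k) →L[ℝ] EuclideanSpace ℝ (Fin k)) (u i) + α i (u i) + β i (v i)‖
          + ‖α i (u i)‖ + ‖β i (v i)‖ := by
        have := norm_add_le ((A : EuclideanSpace ℝ (Fin k) →L[ℝ] EuclideanSpace ℝ (Fin k)) (u i) + α i (u i) + β i (v i)) (-(α i (u i)) + -(β i (v i)))
        have heq : (A : EuclideanSpace ℝ (Fin k) →L[ℝ] EuclideanSpace ℝ (Fin k)) (u i) + α i (u i) + β i (v i) + (-(α i (u i)) + -(β i (v i))) = (A : EuclideanSpace ℝ (Fin k) →L[ℝ] EuclideanSpace ℝ (Fin k)) (u i) := by abel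
        rw [heq] at this
        have := le_trans this (by
          have := norm_add_le (-(α i (u i))) (-(β i (v i)))
          simp only [norm_neg] at this
          linarith [this] :
          ‖(A : EuclideanSpace ℝ (Fin k) →L[ℝ] EuclideanSpace ℝ (Fin k)) (u i) + α i (u i) + β i (v i)‖ + ‖-(α i (u i)) + -(β i (v i))‖ ≤ ‖(A : EuclideanSpace ℝ (Fin k) →L[ℝ] EuclideanSpace ℝ (Fin k)) (u i) + α i (u i) + β i (v i)‖ + (‖α i (u i)‖ + ‖β i (v i)‖))
        linarith
      linarith
    have hvub : ‖v (i+1)‖ ≤ ε * ‖u i‖ + lam * ‖v i‖ + ε * ‖v i‖ := by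
      rw [hv i hi]
      calc ‖γ i (u i) + B (v i) + δ' i (v i)‖ ≤ ‖γ i (u i) + B (v i)‖ + ‖δ' i (v i)‖ :=
            norm_add_le _ _
        _ ≤ ‖γ i (u i)‖ + ‖B (v i)‖ + ‖δ' i (v i)‖ := by
            linarith [norm_add_le (γ i (u i)) (B (v i))]
        _ ≤ ε * ‖u i‖ + lam * ‖v i‖ + ε * ‖v i‖ := by linarith
    have hun : 0 ≤ ‖u i‖ := norm_nonneg _
    have hvn : 0 ≤ ‖v i‖ := norm_nonneg _
    have hca : g ≤ μ - ε - K * ε * ε := by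
      have hh : ε * (1 + K * ε) = ε + K * ε * ε := by ring
      simp only [hgdef]; linarith
    have hcb : ε + K * ε * (lam + ε) ≤ g * (K * ε) := by
      have h := mul_le_mul_of_nonneg_right hcoef hε.le
      calc ε + K * ε * (lam + ε) = (1 + K * (lam + ε)) * ε := by ring
        _ ≤ (K * g) * ε := h
        _ = g * (K * ε) := by ring
    have hKε0 : (0:ℝ) ≤ K * ε := by positivity
    have hA1 := mul_le_mul_of_nonneg_right hca hun
    have hB1 := mul_le_mul_of_nonneg_right hcb hvn
    have hVa := mul_le_mul_of_nonneg_left hvub hKε0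
    calc g * (‖u i‖ - K * ε * ‖v i‖) = g * ‖u i‖ - g * (K * ε) * ‖v i‖ := by ring
      _ ≤ (μ - ε - K * ε * ε) * ‖u i‖ - (ε + K * ε * (lam + ε)) * ‖v i‖ := by nlinarith
      _ = (μ * ‖u i‖ - ε * ‖u i‖ - ε * ‖v i‖)
            - K * ε * (ε * ‖u i‖ + lam * ‖v i‖ + ε * ‖v i‖) := by ring
      _ ≤ ‖u (i+1)‖ - K * ε * ‖v (i+1)‖ := by nlinarith
  -- base case
  have hv0 : ‖v 0‖ ≤ 1 := by nlinarith [norm_nonneg (u 0), norm_nonneg (v 0)]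
  have hsinlb : δ / 2 ≤ Real.sin δ := by
    have := Real.sin_gt_sub_cube hδ0
    have hδ2 : δ ^ 2 ≤ 1 := by nlinarith
    nlinarith [mul_le_mul_of_nonneg_left hδ2 hδ0.le]
  have hKεδ : K * ε ≤ δ / 4 := by linarith
  have hbase : δ / 4 ≤ ‖u 0‖ - K * ε * ‖v 0‖ := by
    have : K * ε * ‖v 0‖ ≤ K * ε * 1 := by
      apply mul_le_mul_of_nonneg_left hv0 (by positivity)
    nlinarith
  -- induction
  have main : ∀ i, i ≤ j → g ^ i * (δ / 4) ≤ ‖u i‖ - K * ε * ‖v i‖ := by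
    intro i
    induction i with
    | zero => intro _; simpa using hbase
    | succ n ih =>
      intro hn
      have hn' : n < j := hn
      have hprev := ih (le_of_lt hn')
      calc g ^ (n+1) * (δ/4) = g * (g ^ n * (δ/4)) := by ring
        _ ≤ g * (‖u n‖ - K * ε * ‖v n‖) := by
            apply mul_le_mul_of_nonneg_left hprev hg0
        _ ≤ ‖u (n+1)‖ - K * ε * ‖v (n+1)‖ := step n hn'
  have hfin := main j le_rfl
  have : 0 ≤ K * ε * ‖v j‖ := by positivity
  have hgoal : g ^ j * (δ/4) ≤ ‖u j‖ := by linarith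
  calc 1/4 * g ^ j * δ = g ^ j * (δ/4) := by ring
    _ ≤ ‖u j‖ := hgoal
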